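/- Let M¹ ∈ ℝ^{m₁×ℓ} and M² ∈ ℝ^{m₂×ℓ} be matrices. Then there exists a constant σ = σ(M¹, M²) ≥ 0, depending only on M¹ and M², with the following property: for all d¹ ∈ ℝ^{m₁} and d² ∈ ℝ^{m₂} such that the set L = {u ∈ ℝ^ℓ : M¹u ≤ d¹, M²u = d²} is nonempty, and for every x ∈ ℝ^ℓ, there exists a point x* ∈ L satisfying ‖x − x*‖₂ ≤ σ · ( ‖(M¹x − d¹)⁺‖₁ + ‖M²x − d²‖₁ ). -/

import Mathlib

open Matrix

/-- The ℓ₁ norm on `Fin n → ℝ`. -/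
noncomputable def l1norm {n : ℕ} (x : Fin n → ℝ) : ℝ := ∑ i, |x i|

/-- The Euclidean (ℓ₂) norm on `Fin n → ℝ`. -/
noncomputable def l2norm {n : ℕ} (x : Fin n → ℝ) : ℝ := Real.sqrt (∑ i, (x i) ^ 2)

namespace HoffmanAux

open Finset

variable {ι : Type*} [Fintype ι] [DecidableEq ι]
variable {E : Type*} [NormedAddCommGroup E] [InnerProductSpace ℝ E] [FiniteDimensional ℝ E]

local notation "⟪" x ", " y "⟫" => @inner ℝ _ _ x y

/-- The cone generated by the vectors `a i`, `i ∈ T`. -/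
def cone (a : ι → E) (T : Finset ι) : Set E :=
  {v | ∃ l : ι → ℝ, (∀ i, 0 ≤ l i) ∧ (∀ i ∉ T, l i = 0) ∧ ∑ i, l i • a i = v}

lemma zero_mem_cone (a : ι → E) (T : Finset ι) : (0 : E) ∈ cone a T :=
  ⟨fun _ => 0, fun _ => le_rfl, fun _ _ => rfl, by simp⟩

lemma generator_mem_cone (a : ι → E) {T : Finset ι} {i : ι} (hi : i ∈ T) :
    a i ∈ cone a T := by
  refine ⟨fun j => if j = i then 1 else 0, ?_, ?_, ?_⟩
  · intro j; by_cases h : j = i <;> simp [h]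
  · intro j hj; simp only [ite_eq_right_iff]; intro h; exact absurd (h ▸ hi) hj
  · simp [ite_smul]

lemma smul_mem_cone (a : ι → E) (T : Finset ι) {c : ℝ} (hc : 0 ≤ c) {v : E}
    (hv : v ∈ cone a T) : c • v ∈ cone a T := by
  obtain ⟨l, hl0, hls, hlsum⟩ := hv
  refine ⟨fun i => c * l i, fun i => mul_nonneg hc (hl0 i), fun i hi => by simp [hls i hi], ?_⟩
  rw [← hlsum, Finset.smul_sum]
  exact Finset.sum_congr rfl fun i _ => by rw [smul_smul]

lemma convex_cone (a : ι → E) (T : Finset ι) : Convex ℝ (cone a T) := by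
  rintro v ⟨l, hl0, hls, hlsum⟩ w ⟨m, hm0, hms, hmsum⟩ p q hp hq _
  refine ⟨fun i => p * l i + q * m i,
    fun i => add_nonneg (mul_nonneg hp (hl0 i)) (mul_nonneg hq (hm0 i)),
    fun i hi => by simp [hls i hi, hms i hi], ?_⟩
  rw [← hlsum, ← hmsum, Finset.smul_sum, Finset.smul_sum, ← Finset.sum_add_distrib]
  exact Finset.sum_congr rfl fun i _ => by
    rw [add_smul, smul_smul, smul_smul]

/-- One step of conic Carathéodory: if the support admits a nontrivial nonnegative-direction
dependence, shrink the support. -/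
lemma caratheodory_step (a : ι → E) (T : Finset ι) {v : E}
    (hv : v ∈ cone a T) (μ : ι → ℝ) (hμs : ∀ i ∉ T, μ i = 0)
    (hμsum : ∑ i, μ i • a i = 0) {i₀ : ι} (hi₀ : 0 < μ i₀) :
    ∃ T' ⊂ T, v ∈ cone a T' := by
  obtain ⟨l, hl0, hls, hlsum⟩ := hv
  have hi₀T : i₀ ∈ T := by
    by_contra h; rw [hμs i₀ h] at hi₀; exact lt_irrefl 0 hi₀
  set P : Finset ι := T.filter (fun i => 0 < μ i) with hP
  have hPne : P.Nonempty := ⟨i₀, Finset.mem_filter.2 ⟨hi₀T, hi₀⟩⟩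
  obtain ⟨i₁, hi₁P, hi₁min⟩ := P.exists_min_image (fun i => l i / μ i) hPne
  have hi₁T : i₁ ∈ T := (Finset.mem_filter.1 hi₁P).1
  have hμi₁ : 0 < μ i₁ := (Finset.mem_filter.1 hi₁P).2
  set t : ℝ := l i₁ / μ i₁ with ht
  have ht0 : 0 ≤ t := div_nonneg (hl0 i₁) hμi₁.le
  refine ⟨T.erase i₁, Finset.erase_ssubset hi₁T, fun i => l i - t * μ i, ?_, ?_, ?_⟩
  · intro i
    show 0 ≤ l i - t * μ i
    by_cases hiP : i ∈ P
    · have hμi : 0 < μ i := (Finset.mem_filter.1 hiP).2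
      have := hi₁min i hiP
      rw [div_le_div_iff₀ hμi₁ hμi] at this
      have : t * μ i ≤ l i := by
        rw [ht, div_mul_eq_mul_div, div_le_iff₀ hμi₁]
        linarith [this]
      linarith
    · have hμi : μ i ≤ 0 := by
        by_cases hiT : i ∈ T
        · by_contra h
          exact hiP (Finset.mem_filter.2 ⟨hiT, lt_of_not_ge h⟩)
        · rw [hμs i hiT]
      have : t * μ i ≤ 0 := mul_nonpos_of_nonneg_of_nonpos ht0 hμi
      linarith [hl0 i]
  · intro i hi
    show l i - t * μ i = 0
    by_cases hiT : i ∈ T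
    · have : i = i₁ := by
        by_contra h
        exact hi (Finset.mem_erase.2 ⟨h, hiT⟩)
      subst this
      rw [ht, div_mul_cancel₀ _ (ne_of_gt hμi₁), sub_self]
    · rw [hls i hiT, hμs i hiT]; ring
  · show ∑ i, (l i - t * μ i) • a i = v
    have h9 : ∑ i, (l i - t * μ i) • a i
        = (∑ i, l i • a i) - t • (∑ i, μ i • a i) := by
      rw [Finset.smul_sum, ← Finset.sum_sub_distrib]
      exact Finset.sum_congr rfl fun i _ => by rw [sub_smul, smul_smul]
    rw [h9, hμsum, smul_zero, sub_zero, hlsum]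

/-- Conic Carathéodory: membership in a finitely generated cone can be witnessed on a
linearly independent subfamily. -/
lemma caratheodory (a : ι → E) (T : Finset ι) :
    ∀ v ∈ cone a T, ∃ S, S ⊆ T ∧
      LinearIndependent ℝ (fun i : {x // x ∈ S} => a i) ∧ v ∈ cone a S := by
  induction T using Finset.strongInductionOn with
  | _ T ih =>
    intro v hv
    by_cases hli : LinearIndependent ℝ (fun i : {x // x ∈ T} => a i)
    · exact ⟨T, Finset.Subset.refl T, hli, hv⟩
    · rw [Fintype.not_linearIndependent_iff] at hli
      obtain ⟨g, hg, j, hgj⟩ := hli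
      set μ : ι → ℝ := fun i => if h : i ∈ T then g ⟨i, h⟩ else 0 with hμdef
      have hμs : ∀ i ∉ T, μ i = 0 := fun i hi => dif_neg hi
      have hμsum : ∑ i, μ i • a i = 0 := by
        rw [← Finset.sum_subset (Finset.subset_univ T)
          (fun i _ hi => by rw [hμs i hi, zero_smul])]
        rw [← Finset.sum_coe_sort T (fun i => μ i • a i), ← hg]
        exact Finset.sum_congr rfl fun i _ => by
          simp [hμdef, i.2]
      have hμj : μ (j : ι) ≠ 0 := by simp [hμdef, j.2, hgj]
      have key : ∃ T' ⊂ T, v ∈ cone a T' := by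
        rcases lt_or_gt_of_ne hμj with hneg | hpos
        · refine caratheodory_step a T hv (fun i => -μ i)
            (fun i hi => by show -μ i = 0; rw [hμs i hi, neg_zero])
            ?_ (i₀ := (j : ι)) (by show 0 < -μ (j : ι); linarith)
          show ∑ i, (-μ i) • a i = 0
          simp only [neg_smul, Finset.sum_neg_distrib, hμsum, neg_zero]
        · exact caratheodory_step a T hv μ hμs hμsum (i₀ := (j : ι)) hpos
      obtain ⟨T', hT'ss, hvT'⟩ := key
      obtain ⟨S, hST', hSli, hvS⟩ := ih T' hT'ss v hvT'
      exact ⟨S, hST'.trans hT'ss.subset, hSli, hvS⟩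

/-- The linear map sending coefficients supported on `S` to the corresponding combination. -/
def combMap (a : ι → E) (S : Finset ι) : ({x // x ∈ S} → ℝ) →ₗ[ℝ] E where
  toFun := fun μ => ∑ j : {x // x ∈ S}, μ j • a j
  map_add' := by
    intro μ ν
    rw [← Finset.sum_add_distrib]
    exact Finset.sum_congr rfl fun i _ => by rw [Pi.add_apply, add_smul]
  map_smul' := by
    intro c μ
    rw [RingHom.id_apply, Finset.smul_sum]
    exact Finset.sum_congr rfl fun i _ => by rw [Pi.smul_apply, smul_smul, smul_eq_mul]

lemma combMap_ker (a : ι → E) (S : Finset ι)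
    (h : LinearIndependent ℝ (fun i : {x // x ∈ S} => a i)) :
    LinearMap.ker (combMap a S) = ⊥ := by
  rw [LinearMap.ker_eq_bot']
  intro μ hμ
  rw [Fintype.linearIndependent_iff] at h
  funext i
  exact h μ hμ i

lemma combMap_eq_sum (a : ι → E) (S : Finset ι) (l : ι → ℝ) (hls : ∀ i ∉ S, l i = 0) :
    combMap a S (fun j => l j) = ∑ i, l i • a i := by
  show ∑ j : {x // x ∈ S}, l (j : ι) • a (j : ι) = _
  rw [Finset.sum_coe_sort S (fun i => l i • a i)]
  exact Finset.sum_subset (Finset.subset_univ S)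
    (fun i _ hi => by rw [hls i hi, zero_smul])

set_option synthInstance.maxHeartbeats 1000000 in
set_option maxHeartbeats 1000000 in
/-- For a linearly independent subfamily the coefficients are controlled by the norm of the
combination. -/
lemma exists_bound (a : ι → E) (S : Finset ι)
    (h : LinearIndependent ℝ (fun i : {x // x ∈ S} => a i)) :
    ∃ c : ℝ, 0 ≤ c ∧ ∀ l : ι → ℝ, (∀ i ∉ S, l i = 0) →
      ∀ i, |l i| ≤ c * ‖∑ j, l j • a j‖ := by
  set Tm := combMap a S
  have hker := combMap_ker a S h
  have hinj : Function.Injective Tm := LinearMap.ker_eq_bot.mp hker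
  set e := LinearEquiv.ofInjective Tm hinj
  set g := LinearMap.toContinuousLinearMap (e.symm : LinearMap.range Tm →ₗ[ℝ] ({x // x ∈ S} → ℝ))
  have hg0 : (0:ℝ) ≤ ‖g‖ := norm_nonneg g
  refine ⟨‖g‖, hg0, ?_⟩
  intro l hls i
  set μ : {x // x ∈ S} → ℝ := fun j => l j
  have hsum : Tm μ = ∑ j, l j • a j := combMap_eq_sum a S l hls
  have hmem : Tm μ ∈ LinearMap.range Tm := ⟨μ, rfl⟩
  have he : e μ = ⟨Tm μ, hmem⟩ := Subtype.ext (by simp [e])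
  have hμeq : μ = g ⟨Tm μ, hmem⟩ := by
    rw [← he]
    show μ = e.symm (e μ)
    rw [LinearEquiv.symm_apply_apply]
  have hnorm : ‖μ‖ ≤ ‖g‖ * ‖Tm μ‖ := by
    calc ‖μ‖ = ‖g ⟨Tm μ, hmem⟩‖ := by rw [← hμeq]
    _ ≤ ‖g‖ * ‖(⟨Tm μ, hmem⟩ : LinearMap.range Tm)‖ := g.le_opNorm _
    _ = ‖g‖ * ‖Tm μ‖ := rfl
  by_cases hi : i ∈ S
  · calc |l i| = ‖μ ⟨i, hi⟩‖ := rfl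
      _ ≤ ‖μ‖ := norm_le_pi_norm μ ⟨i, hi⟩
      _ ≤ ‖g‖ * ‖Tm μ‖ := hnorm
      _ = ‖g‖ * ‖∑ j, l j • a j‖ := by rw [hsum]
  · rw [hls i hi]
    simp only [abs_zero]
    exact mul_nonneg hg0 (norm_nonneg _)

lemma cone_eq_image (a : ι → E) (S : Finset ι) :
    cone a S = (combMap a S) '' {μ | ∀ j, 0 ≤ μ j} := by
  ext v
  constructor
  · rintro ⟨l, hl0, hls, hlsum⟩
    exact ⟨fun j => l j, fun j => hl0 j, by rw [combMap_eq_sum a S l hls, hlsum]⟩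
  · rintro ⟨μ, hμ0, rfl⟩
    refine ⟨fun i => if h : i ∈ S then μ ⟨i, h⟩ else 0, ?_, ?_, ?_⟩
    · intro i
      by_cases h : i ∈ S
      · simpa [h] using hμ0 ⟨i, h⟩
      · simp [h]
    · intro i hi; exact dif_neg hi
    · rw [← combMap_eq_sum a S _ (fun i hi => dif_neg hi)]
      congr 1
      funext j
      simp [j.2]

lemma isClosed_cone_of_li (a : ι → E) (S : Finset ι)
    (h : LinearIndependent ℝ (fun i : {x // x ∈ S} => a i)) :
    IsClosed (cone a S) := by
  rw [cone_eq_image]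
  have hemb := LinearMap.isClosedEmbedding_of_injective (combMap_ker a S h)
  apply hemb.isClosedMap
  have : {μ : {x // x ∈ S} → ℝ | ∀ j, 0 ≤ μ j} = ⋂ j, {μ | 0 ≤ μ j} := by
    ext μ; simp [Set.mem_iInter]
  rw [this]
  exact isClosed_iInter fun j => isClosed_le continuous_const (continuous_apply j)

lemma cone_mono (a : ι → E) {S T : Finset ι} (hST : S ⊆ T) : cone a S ⊆ cone a T := by
  rintro v ⟨l, hl0, hls, hlsum⟩
  exact ⟨l, hl0, fun i hi => hls i (fun h => hi (hST h)), hlsum⟩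

lemma isClosed_cone (a : ι → E) (T : Finset ι) : IsClosed (cone a T) := by
  have : cone a T = ⋃ S : {S : Finset ι // S ⊆ T ∧
      LinearIndependent ℝ (fun i : {x // x ∈ (S : Finset ι)} => a i)}, cone a (S : Finset ι) := by
    apply Set.Subset.antisymm
    · intro v hv
      obtain ⟨S, hST, hSli, hvS⟩ := caratheodory a T v hv
      exact Set.mem_iUnion.2 ⟨⟨S, hST, hSli⟩, hvS⟩
    · intro v hv
      obtain ⟨S, hvS⟩ := Set.mem_iUnion.1 hv
      exact cone_mono a S.2.1 hvS
  rw [this]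
  exact isClosed_iUnion_of_finite fun S => isClosed_cone_of_li a S.1 S.2.2

/-- Farkas-type lemma: a vector in the normal cone of a polyhedron at a point lies in the cone
generated by the active constraints. -/
lemma mem_cone_of_normal (a : ι → E) (d : ι → ℝ) (xs : E)
    (hxs : ∀ i, ⟪a i, xs⟫ ≤ d i) (v : E)
    (hv : ∀ u : E, (∀ i, ⟪a i, u⟫ ≤ d i) → ⟪v, u - xs⟫ ≤ 0) :
    v ∈ cone a (Finset.univ.filter (fun i => ⟪a i, xs⟫ = d i)) := by
  by_contra hvc
  set T := Finset.univ.filter (fun i => ⟪a i, xs⟫ = d i) with hT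
  obtain ⟨f, u, hfb, hfv⟩ :=
    geometric_hahn_banach_closed_point (convex_cone a T) (isClosed_cone a T) hvc
  have hu0 : 0 < u := by
    have := hfb 0 (zero_mem_cone a T)
    rwa [map_zero] at this
  have hfb' : ∀ b ∈ cone a T, f b ≤ 0 := by
    intro b hb
    by_contra h
    push_neg at h
    have hc : (0:ℝ) ≤ 2 * u / f b := by positivity
    have := hfb _ (smul_mem_cone a T hc hb)
    rw [_root_.map_smul, smul_eq_mul, div_mul_cancel₀ _ (ne_of_gt h)] at this
    linarith
  set w := (InnerProductSpace.toDual ℝ E).symm f with hwdef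
  have hw : ∀ y : E, ⟪w, y⟫ = f y := fun y => InnerProductSpace.toDual_symm_apply
  have haw : ∀ i ∈ T, ⟪a i, w⟫ ≤ 0 := by
    intro i hi
    rw [real_inner_comm, hw]
    exact hfb' _ (generator_mem_cone a hi)
  have hslack : ∀ i ∉ T, ⟪a i, xs⟫ < d i := by
    intro i hi
    rcases lt_or_eq_of_le (hxs i) with h | h
    · exact h
    · exact absurd (Finset.mem_filter.2 ⟨Finset.mem_univ i, h⟩) hi
  set g : ι → ℝ := fun i => if i ∈ T then 1 else (d i - ⟪a i, xs⟫) / (|⟪a i, w⟫| + 1) with hgdef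
  set F : Finset ℝ := insert (1:ℝ) (Finset.univ.image g) with hF
  have hFne : F.Nonempty := ⟨1, Finset.mem_insert_self _ _⟩
  set t := F.min' hFne with htdef
  have hFpos : ∀ r ∈ F, 0 < r := by
    intro r hr
    rcases Finset.mem_insert.1 hr with h | h
    · rw [h]; norm_num
    · obtain ⟨i, _, rfl⟩ := Finset.mem_image.1 h
      by_cases hi : i ∈ T
      · simp [hgdef, hi]
      · have := hslack i hi
        have h1 : (0:ℝ) < |⟪a i, w⟫| + 1 := by positivity
        simp only [hgdef, if_neg hi]
        exact div_pos (by linarith) h1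
  have htpos : 0 < t := hFpos t (F.min'_mem hFne)
  have htg : ∀ i, t ≤ g i := fun i =>
    F.min'_le _ (Finset.mem_insert_of_mem (Finset.mem_image_of_mem g (Finset.mem_univ i)))
  have hu' : ∀ i, ⟪a i, xs + t • w⟫ ≤ d i := by
    intro i
    rw [inner_add_right, real_inner_smul_right]
    by_cases hi : i ∈ T
    · have h1 : ⟪a i, xs⟫ = d i := (Finset.mem_filter.1 hi).2
      have h2 : t * ⟪a i, w⟫ ≤ 0 := mul_nonpos_of_nonneg_of_nonpos htpos.le (haw i hi)
      linarith
    · have hs := hslack i hi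
      set s := d i - ⟪a i, xs⟫ with hsdef
      have hs0 : 0 < s := by linarith
      set cc := ⟪a i, w⟫ with hccdef
      have habs : (0:ℝ) < |cc| + 1 := by positivity
      have h1 : t * cc ≤ t * |cc| :=
        mul_le_mul_of_nonneg_left (le_abs_self cc) htpos.le
      have h2 : t * |cc| ≤ g i * |cc| :=
        mul_le_mul_of_nonneg_right (htg i) (abs_nonneg cc)
      have h3 : g i * |cc| ≤ s := by
        rw [hgdef]
        simp only [if_neg hi]
        rw [div_mul_eq_mul_div, div_le_iff₀ habs]
        nlinarith [abs_nonneg cc, hs0]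
      linarith
  have hcontra := hv _ hu'
  rw [add_sub_cancel_left, real_inner_smul_right, real_inner_comm, hw] at hcontra
  nlinarith
  
/-- Core Hoffman bound over an abstract finite-dimensional real inner product space. -/
theorem hoffman_core (a : ι → E) :
    ∃ σ : ℝ, 0 ≤ σ ∧ ∀ d : ι → ℝ, (∃ u : E, ∀ i, ⟪a i, u⟫ ≤ d i) →
      ∀ x : E, ∃ xs : E, (∀ i, ⟪a i, xs⟫ ≤ d i) ∧
        ‖x - xs‖ ≤ σ * ∑ i, max (⟪a i, x⟫ - d i) 0 := by
  classical
  set c : Finset ι → ℝ := fun S =>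
    if h : LinearIndependent ℝ (fun i : {x // x ∈ S} => a i)
    then (exists_bound a S h).choose else 0 with hcdef
  have hc0 : ∀ S, 0 ≤ c S := by
    intro S
    simp only [hcdef]
    split
    · exact (exists_bound a S ‹_›).choose_spec.1
    · exact le_rfl
  have hcspec : ∀ S (h : LinearIndependent ℝ (fun i : {x // x ∈ S} => a i)),
      ∀ l : ι → ℝ, (∀ i ∉ S, l i = 0) → ∀ i, |l i| ≤ c S * ‖∑ j, l j • a j‖ := by
    intro S h
    have hcS : c S = (exists_bound a S h).choose := by
      simp only [hcdef]; rw [dif_pos h]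
    rw [hcS]
    exact (exists_bound a S h).choose_spec.2
  set σ : ℝ := ∑ S : Finset ι, c S with hσdef
  have hσ0 : 0 ≤ σ := Finset.sum_nonneg fun S _ => hc0 S
  have hcσ : ∀ S : Finset ι, c S ≤ σ := fun S =>
    Finset.single_le_sum (fun S _ => hc0 S) (Finset.mem_univ S)
  refine ⟨σ, hσ0, ?_⟩
  rintro d ⟨u0, hu0⟩ x
  set L : Set E := {u | ∀ i, ⟪a i, u⟫ ≤ d i} with hLdef
  have hLconv : Convex ℝ L := by
    intro u hu w hw p q hp hq hpq
    intro i
    have h1 : ⟪a i, p • u + q • w⟫ = p * ⟪a i, u⟫ + q * ⟪a i, w⟫ := by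
      rw [inner_add_right, real_inner_smul_right, real_inner_smul_right]
    rw [h1]
    calc p * ⟪a i, u⟫ + q * ⟪a i, w⟫ ≤ p * d i + q * d i := by
          gcongr <;> [exact hu i; exact hw i]
      _ = d i := by rw [← add_mul, hpq, one_mul]
  have hLclosed : IsClosed L := by
    have : L = ⋂ i, {u : E | ⟪a i, u⟫ ≤ d i} := by
      ext u; simp [hLdef, Set.mem_iInter]
    rw [this]
    exact isClosed_iInter fun i =>
      isClosed_le (Continuous.inner continuous_const continuous_id) continuous_const
  have hu0L : u0 ∈ L := hu0
  obtain ⟨xs, hxsL, hproj⟩ :=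
    exists_norm_eq_iInf_of_complete_convex ⟨u0, hu0L⟩ hLclosed.isComplete hLconv x
  have hnormal : ∀ w ∈ L, ⟪x - xs, w - xs⟫ ≤ 0 :=
    (norm_eq_iInf_iff_real_inner_le_zero hLconv hxsL).mp hproj
  refine ⟨xs, hxsL, ?_⟩
  have hres0 : 0 ≤ ∑ i, max (⟪a i, x⟫ - d i) 0 :=
    Finset.sum_nonneg fun i _ => le_max_right _ _
  set v := x - xs with hvdef
  by_cases hv0 : v = 0
  · have : ‖x - xs‖ = 0 := by rw [← hvdef, hv0, norm_zero]
    rw [this]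
    exact mul_nonneg hσ0 hres0
  · have hvmem := mem_cone_of_normal a d xs hxsL v (fun u hu => hnormal u hu)
    obtain ⟨S, hST, hSli, l, hl0, hlsupp, hlsum⟩ :=
      caratheodory a _ v hvmem
    have hlv : ∑ j, l j • a j = v := hlsum
    have hactive : ∀ i ∈ S, ⟪a i, xs⟫ = d i := by
      intro i hi
      exact (Finset.mem_filter.1 (hST hi)).2
    have hvpos : 0 < ‖v‖ := norm_pos_iff.2 hv0
    have key : ‖v‖ ^ 2 ≤ (c S * ‖v‖) * ∑ i, max (⟪a i, x⟫ - d i) 0 := by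
      have h1 : ‖v‖ ^ 2 = ⟪v, v⟫ := (real_inner_self_eq_norm_sq v).symm
      have h2 : ⟪v, v⟫ = ∑ i, l i * ⟪a i, v⟫ := by
        nth_rw 1 [← hlv]
        rw [sum_inner]
        exact Finset.sum_congr rfl fun i _ => real_inner_smul_left _ _ _
      have h3 : ∀ i, l i * ⟪a i, v⟫ ≤ (c S * ‖v‖) * max (⟪a i, x⟫ - d i) 0 := by
        intro i
        by_cases hi : i ∈ S
        · have hip : ⟪a i, v⟫ = ⟪a i, x⟫ - d i := by
            rw [hvdef, inner_sub_right, hactive i hi]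
          rw [hip]
          have hli : l i ≤ c S * ‖v‖ := by
            have := hcspec S hSli l hlsupp i
            rw [hlv] at this
            exact (le_abs_self (l i)).trans this
          calc l i * (⟪a i, x⟫ - d i) ≤ l i * max (⟪a i, x⟫ - d i) 0 :=
                mul_le_mul_of_nonneg_left (le_max_left _ _) (hl0 i)
            _ ≤ (c S * ‖v‖) * max (⟪a i, x⟫ - d i) 0 :=
                mul_le_mul_of_nonneg_right hli (le_max_right _ _)
        · rw [hlsupp i hi, zero_mul]
          exact mul_nonneg (mul_nonneg (hc0 S) hvpos.le) (le_max_right _ _)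
      calc ‖v‖ ^ 2 = ∑ i, l i * ⟪a i, v⟫ := by rw [h1, h2]
        _ ≤ ∑ i, (c S * ‖v‖) * max (⟪a i, x⟫ - d i) 0 := Finset.sum_le_sum fun i _ => h3 i
        _ = (c S * ‖v‖) * ∑ i, max (⟪a i, x⟫ - d i) 0 := by rw [← Finset.mul_sum]
    have h4 : ‖v‖ ≤ c S * ∑ i, max (⟪a i, x⟫ - d i) 0 := by
      have h5 : ‖v‖ * ‖v‖ ≤ (c S * ∑ i, max (⟪a i, x⟫ - d i) 0) * ‖v‖ := by
        nlinarith [key]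
      exact le_of_mul_le_mul_right h5 hvpos
    calc ‖x - xs‖ = ‖v‖ := rfl
      _ ≤ c S * ∑ i, max (⟪a i, x⟫ - d i) 0 := h4
      _ ≤ σ * ∑ i, max (⟪a i, x⟫ - d i) 0 :=
        mul_le_mul_of_nonneg_right (hcσ S) hres0

end HoffmanAux

/-- Hoffman's error bound for linear systems (Robinson's form): there is a constant
`σ = σ(M¹, M²) ≥ 0` such that whenever the set
`L = {u : M¹ u ≤ d¹, M² u = d²}` is nonempty, every point `x` admits a point `x* ∈ L` with
`‖x − x*‖₂ ≤ σ (‖(M¹x − d¹)⁺‖₁ + ‖M²x − d²‖₁)`. -/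
theorem hoffman_robinson_error_bound (m₁ m₂ ℓ : ℕ)
    (M1 : Matrix (Fin m₁) (Fin ℓ) ℝ) (M2 : Matrix (Fin m₂) (Fin ℓ) ℝ) :
    ∃ σ : ℝ, 0 ≤ σ ∧
      ∀ (d1 : Fin m₁ → ℝ) (d2 : Fin m₂ → ℝ),
        (∃ u : Fin ℓ → ℝ, (∀ i, M1.mulVec u i ≤ d1 i) ∧ M2.mulVec u = d2) →
        ∀ x : Fin ℓ → ℝ, ∃ xs : Fin ℓ → ℝ,
          (∀ i, M1.mulVec xs i ≤ d1 i) ∧ M2.mulVec xs = d2 ∧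
          l2norm (x - xs) ≤
            σ * (l1norm (fun i => max (M1.mulVec x i - d1 i) 0)
                  + l1norm (M2.mulVec x - d2)) := by
  classical
  have inner_eq : ∀ (w u : Fin ℓ → ℝ),
      @inner ℝ (EuclideanSpace ℝ (Fin ℓ)) _ (WithLp.toLp 2 w) (WithLp.toLp 2 u) = ∑ j, w j * u j := by
    intro w u
    rw [PiLp.inner_apply]
    exact Finset.sum_congr rfl fun j _ => by
      rw [RCLike.inner_apply', starRingEnd_apply, star_trivial]
  set a : (Fin m₁ ⊕ (Fin m₂ ⊕ Fin m₂)) → EuclideanSpace ℝ (Fin ℓ) :=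
    Sum.elim (fun i => WithLp.toLp 2 (M1 i : Fin ℓ → ℝ))
      (Sum.elim (fun i => WithLp.toLp 2 (M2 i : Fin ℓ → ℝ)) (fun i => WithLp.toLp 2 (fun j => -M2 i j : Fin ℓ → ℝ)))
    with hadef
  have ha1 : ∀ (i : Fin m₁) (u : Fin ℓ → ℝ),
      @inner ℝ (EuclideanSpace ℝ (Fin ℓ)) _ (a (Sum.inl i)) (WithLp.toLp 2 u) = M1.mulVec u i := by
    intro i u
    rw [hadef, Sum.elim_inl, inner_eq]
    simp [Matrix.mulVec, dotProduct]
  have ha2 : ∀ (i : Fin m₂) (u : Fin ℓ → ℝ),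
      @inner ℝ (EuclideanSpace ℝ (Fin ℓ)) _ (a (Sum.inr (Sum.inl i))) (WithLp.toLp 2 u) = M2.mulVec u i := by
    intro i u
    rw [hadef, Sum.elim_inr, Sum.elim_inl, inner_eq]
    simp [Matrix.mulVec, dotProduct]
  have ha3 : ∀ (i : Fin m₂) (u : Fin ℓ → ℝ),
      @inner ℝ (EuclideanSpace ℝ (Fin ℓ)) _ (a (Sum.inr (Sum.inr i))) (WithLp.toLp 2 u) = -(M2.mulVec u i) := by
    intro i u
    rw [hadef, Sum.elim_inr, Sum.elim_inr, inner_eq]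
    simp [Matrix.mulVec, dotProduct, neg_mul, Finset.sum_neg_distrib]
  obtain ⟨σ, hσ0, hσ⟩ := HoffmanAux.hoffman_core a
  refine ⟨σ, hσ0, ?_⟩
  rintro d1 d2 ⟨u, hu1, hu2⟩ x
  set d : (Fin m₁ ⊕ (Fin m₂ ⊕ Fin m₂)) → ℝ :=
    Sum.elim d1 (Sum.elim d2 (fun i => -d2 i)) with hddef
  have hfeas : ∃ u' : EuclideanSpace ℝ (Fin ℓ), ∀ i,
      @inner ℝ (EuclideanSpace ℝ (Fin ℓ)) _ (a i) u' ≤ d i := by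
    refine ⟨WithLp.toLp 2 u, ?_⟩
    rintro (i | i | i)
    · rw [ha1]; exact hu1 i
    · rw [ha2, hddef]
      simp [congrFun hu2 i]
    · rw [ha3, hddef]
      simp [congrFun hu2 i]
  obtain ⟨xs, hxs, hbound⟩ := hσ d hfeas (WithLp.toLp 2 x)
  obtain ⟨xs, rfl⟩ : ∃ y, xs = WithLp.toLp 2 y := ⟨xs.ofLp, rfl⟩
  have hxs1 : ∀ i, M1.mulVec xs i ≤ d1 i := by
    intro i
    have := hxs (Sum.inl i)
    rwa [ha1] at this
  have hxs2 : M2.mulVec xs = d2 := by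
    funext i
    have h1 := hxs (Sum.inr (Sum.inl i))
    have h2 := hxs (Sum.inr (Sum.inr i))
    rw [ha2] at h1
    rw [ha3] at h2
    simp only [hddef, Sum.elim_inr, Sum.elim_inl] at h1 h2
    have : -(M2.mulVec xs i) ≤ -d2 i := h2
    exact le_antisymm h1 (by linarith)
  refine ⟨xs, hxs1, hxs2, ?_⟩
  have hl2 : ∀ y : Fin ℓ → ℝ, l2norm y = ‖WithLp.toLp 2 y‖ := by
    intro y
    rw [EuclideanSpace.norm_eq]
    unfold l2norm
    congr 1
    exact Finset.sum_congr rfl fun i _ => by rw [Real.norm_eq_abs, sq_abs]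
  have habs : ∀ r : ℝ, max r 0 + max (-r) 0 = |r| := by
    intro r
    rcases le_total 0 r with h | h
    · rw [max_eq_left h, max_eq_right (neg_nonpos.2 h), add_zero, abs_of_nonneg h]
    · rw [max_eq_right h, max_eq_left (neg_nonneg.2 h), zero_add, abs_of_nonpos h]
  have hres : ∑ i, max (@inner ℝ (EuclideanSpace ℝ (Fin ℓ)) _ (a i) (WithLp.toLp 2 x) - d i) 0 =
      l1norm (fun i => max (M1.mulVec x i - d1 i) 0) + l1norm (M2.mulVec x - d2) := by
    rw [Fintype.sum_sum_type, Fintype.sum_sum_type]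
    unfold l1norm
    congr 1
    · refine Finset.sum_congr rfl fun i _ => ?_
      rw [ha1]
      simp only [hddef, Sum.elim_inl]
      exact (abs_of_nonneg (le_max_right _ _)).symm
    · rw [← Finset.sum_add_distrib]
      refine Finset.sum_congr rfl fun i _ => ?_
      rw [ha2, ha3]
      simp only [hddef, Sum.elim_inr, Sum.elim_inl, Pi.sub_apply]
      rw [← habs (M2.mulVec x i - d2 i)]
      congr 2
      ring
  rw [hres] at hbound
  exact le_trans (le_of_eq (hl2 _)) hbound
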